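/- Let G be a finite group generated by a twisted subgroup K. Then Ξ_K(G) := {g ∈ G : g ≡ 1} is a normal subgroup of G, and Ψ_K(G) := {g ∈ G : gK = K} is a normal subgroup of G containing Ξ_K(G). Moreover Ψ_K(G)K = K = KΨ_K(G) and Ψ_K(G) ⊆ K. -/

import Mathlib

open scoped Pointwise

/-- A subset `K` of a group is a twisted subgroup if `1 ∈ K`, `x⁻¹ ∈ K` for all
`x ∈ K`, and `x*y*x ∈ K` for all `x, y ∈ K`. -/
def IsTwistedSubgroup {G : Type*} [Group G] (K : Set G) : Prop :=
  (1 : G) ∈ K ∧ (∀ x ∈ K, x⁻¹ ∈ K) ∧ (∀ x ∈ K, ∀ y ∈ K, x * y * x ∈ K)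

/-- The relation `≡` determined by `K`: `g ≡ h` iff there are `k₁, …, kₙ ∈ K`
with `g = k₁ k₂ ⋯ kₙ` and `h = k₁⁻¹ k₂⁻¹ ⋯ kₙ⁻¹`. -/
def TwistedEquiv {G : Type*} [Group G] (K : Set G) (g h : G) : Prop :=
  ∃ l : List G, (∀ x ∈ l, x ∈ K) ∧ g = l.prod ∧ h = (l.map (·⁻¹)).prod

section Aux

variable {G : Type*} [Group G]

/-- product of reversed list of inverses is inverse of product -/
lemma aux_mapinvrev (l : List G) : (l.reverse.map (·⁻¹)).prod = l.prod⁻¹ := by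
  induction l with
  | nil => simp
  | cons a l ih =>
    simp only [List.reverse_cons, List.map_append, List.prod_append, List.map_cons,
      List.map_nil, List.prod_cons, List.prod_nil, mul_one, ih, mul_inv_rev]

lemma aux_revprod (l : List G) : l.reverse.prod = ((l.map (·⁻¹)).prod)⁻¹ := by
  induction l with
  | nil => simp
  | cons a l ih => simp [ih, List.prod_append]

/-- Sandwich lemma: `k₁⋯kₙ * m * kₙ⋯k₁ ∈ K`. -/
lemma aux_sandwich {K : Set G} (hK : IsTwistedSubgroup K) :
    ∀ l : List G, (∀ x ∈ l, x ∈ K) → ∀ m ∈ K, l.prod * m * l.reverse.prod ∈ K := by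
  obtain ⟨h1, hinv, htw⟩ := hK
  intro l
  induction l with
  | nil => intro _ m hm; simpa using hm
  | cons a l ih =>
    intro hmem m hm
    have ha : a ∈ K := hmem a List.mem_cons_self
    have h := htw a ha _ (ih (fun x hx => hmem x (List.mem_cons_of_mem _ hx)) m hm)
    have : a * (l.prod * m * l.reverse.prod) * a
        = (a :: l).prod * m * (a :: l).reverse.prod := by
      simp [List.prod_append, mul_assoc]
    rwa [this] at h

end Aux

/-- For a finite group `G` generated by a twisted subgroup `K`,
`Ξ_K(G) = {g : g ≡ 1}` is a normal subgroup, `Ψ_K(G) = {g : gK = K}` is a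
normal subgroup containing `Ξ_K(G)`, `Ψ_K(G)K = K = KΨ_K(G)`, and
`Ψ_K(G) ⊆ K`. -/
theorem xi_psi_normal {G : Type*} [Group G] [Finite G]
    (K : Set G) (hK : IsTwistedSubgroup K)
    (hgen : Subgroup.closure K = ⊤) :
    ∃ Xi Psi : Subgroup G,
      Xi.Normal ∧ (Xi : Set G) = {g : G | TwistedEquiv K g 1} ∧
      Psi.Normal ∧ (Psi : Set G) = {g : G | ({g} : Set G) * K = K} ∧
      Xi ≤ Psi ∧
      (Psi : Set G) * K = K ∧ K * (Psi : Set G) = K ∧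
      (Psi : Set G) ⊆ K := by
  obtain ⟨h1, hinv, htw⟩ := hK
  -- from gK ⊆ K conclude gK = K, by finiteness
  have keyfin : ∀ g : G, ({g} : Set G) * K ⊆ K → ({g} : Set G) * K = K := by
    intro g hsub
    have himg : ({g} : Set G) * K = (g * ·) '' K := by
      ext x; simp [Set.mem_mul]
    apply Set.eq_of_subset_of_ncard_le hsub
    rw [himg, Set.ncard_image_of_injective _ (mul_right_injective g)]
  have memmul : ∀ g : G, ∀ x ∈ K, g * x ∈ ({g} : Set G) * K := by
    intro g x hx
    exact Set.mul_mem_mul rfl hx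
  -- Xi as a subgroup
  have xi_one : TwistedEquiv K (1 : G) 1 := ⟨[], by simp, by simp, by simp⟩
  have xi_mul : ∀ a b : G, TwistedEquiv K a 1 → TwistedEquiv K b 1 →
      TwistedEquiv K (a * b) 1 := by
    rintro a b ⟨l, hl, hal, hl1⟩ ⟨m, hm, hbm, hm1⟩
    refine ⟨l ++ m, ?_, ?_, ?_⟩
    · intro x hx; rcases List.mem_append.mp hx with h | h
      exacts [hl x h, hm x h]
    · simp [List.prod_append, hal, hbm]
    · simp [List.prod_append, ← hl1, ← hm1]
  have xi_inv : ∀ a : G, TwistedEquiv K a 1 → TwistedEquiv K a⁻¹ 1 := by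
    rintro a ⟨l, hl, hal, hl1⟩
    refine ⟨l.reverse.map (·⁻¹), ?_, ?_, ?_⟩
    · intro x hx
      simp only [List.mem_map, List.mem_reverse] at hx
      obtain ⟨y, hy, rfl⟩ := hx
      exact hinv y (hl y hy)
    · rw [aux_mapinvrev, hal]
    · have : (l.reverse.map (·⁻¹)).map (·⁻¹) = l.reverse := by
        rw [List.map_map]; simp
      rw [this, aux_revprod, ← hl1]
      simp
  let Xi : Subgroup G :=
    { carrier := {g : G | TwistedEquiv K g 1}
      one_mem' := xi_one
      mul_mem' := fun ha hb => xi_mul _ _ ha hb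
      inv_mem' := fun ha => xi_inv _ ha }
  -- conjugation of Xi members by elements of K
  have conjXi : ∀ k ∈ K, ∀ g : G, TwistedEquiv K g 1 → TwistedEquiv K (k * g * k⁻¹) 1 := by
    rintro k hk g ⟨l, hl, hgl, hl1⟩
    refine ⟨k :: (l ++ [k⁻¹]), ?_, ?_, ?_⟩
    · intro x hx
      rcases List.mem_cons.mp hx with rfl | hx
      · exact hk
      rcases List.mem_append.mp hx with h | h
      · exact hl x h
      · simp at h; subst h; exact hinv k hk
    · simp [List.prod_append, hgl, mul_assoc]
    · simp [List.prod_append, ← hl1]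
  -- Psi as a subgroup
  have psi_mul : ∀ a b : G, ({a} : Set G) * K = K → ({b} : Set G) * K = K →
      ({a * b} : Set G) * K = K := by
    intro a b ha hb
    calc ({a * b} : Set G) * K = {a} * ({b} * K) := by
          rw [← Set.singleton_mul_singleton, mul_assoc]
      _ = K := by rw [hb, ha]
  have psi_inv : ∀ a : G, ({a} : Set G) * K = K → ({a⁻¹} : Set G) * K = K := by
    intro a ha
    calc ({a⁻¹} : Set G) * K = {a⁻¹} * ({a} * K) := by rw [ha]
      _ = ({a⁻¹ * a} : Set G) * K := by rw [← Set.singleton_mul_singleton, mul_assoc]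
      _ = K := by simp
  let Psi : Subgroup G :=
    { carrier := {g : G | ({g} : Set G) * K = K}
      one_mem' := by simp
      mul_mem' := fun ha hb => psi_mul _ _ ha hb
      inv_mem' := fun ha => psi_inv _ ha }
  -- conjugation of Psi members by elements of K
  have conjPsi : ∀ k ∈ K, ∀ g : G, ({g} : Set G) * K = K →
      ({k * g * k⁻¹} : Set G) * K = K := by
    intro k hk g hg
    apply keyfin
    rintro x hx
    rw [Set.mem_mul] at hx
    obtain ⟨y, hy, m, hm, rfl⟩ := hx
    rw [Set.mem_singleton_iff] at hy; subst hy
    have hki : k⁻¹ ∈ K := hinv k hk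
    have h2 : k⁻¹ * m * k⁻¹ ∈ K := htw k⁻¹ hki m hm
    have h3 : g * (k⁻¹ * m * k⁻¹) ∈ K := by
      have := memmul g _ h2; rwa [hg] at this
    have h4 : k * (g * (k⁻¹ * m * k⁻¹)) * k ∈ K := htw k hk _ h3
    have : k * (g * (k⁻¹ * m * k⁻¹)) * k = k * g * k⁻¹ * m := by
      group
    rwa [this] at h4
  -- Xi ≤ Psi
  have xile : ∀ g : G, TwistedEquiv K g 1 → ({g} : Set G) * K = K := by
    rintro g ⟨l, hl, hgl, hl1⟩
    have hrev : l.reverse.prod = 1 := by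
      rw [aux_revprod, ← hl1]; simp
    apply keyfin
    rintro x hx
    rw [Set.mem_mul] at hx
    obtain ⟨y, hy, m, hm, rfl⟩ := hx
    rw [Set.mem_singleton_iff] at hy; subst hy
    have := aux_sandwich ⟨h1, hinv, htw⟩ l hl m hm
    rwa [hrev, mul_one, ← hgl] at this
  -- normality via normalizer = ⊤
  have normal_of_conj : ∀ H : Subgroup G,
      (∀ k ∈ K, ∀ g ∈ H, k * g * k⁻¹ ∈ H) → H.Normal := by
    intro H hconj
    rw [← Subgroup.normalizer_eq_top_iff, eq_top_iff, ← hgen, Subgroup.closure_le]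
    intro k hk
    rw [SetLike.mem_coe, Subgroup.mem_normalizer_iff]
    intro h
    constructor
    · exact fun hh => hconj k hk h hh
    · intro hh
      have := hconj k⁻¹ (hinv k hk) _ hh
      have e : k⁻¹ * (k * h * k⁻¹) * k⁻¹⁻¹ = h := by group
      rwa [e] at this
  refine ⟨Xi, Psi, ?_, rfl, ?_, rfl, ?_, ?_, ?_, ?_⟩
  · exact normal_of_conj Xi fun k hk g hg => conjXi k hk g hg
  · exact normal_of_conj Psi fun k hk g hg => conjPsi k hk g hg
  · exact fun g hg => xile g hg
  · -- Psi * K = K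
    apply Set.Subset.antisymm
    · rintro x hx
      rw [Set.mem_mul] at hx
      obtain ⟨p, hp, m, hm, rfl⟩ := hx
      have hpK : ({p} : Set G) * K = K := hp
      have := memmul p m hm; rwa [hpK] at this
    · intro m hm
      exact ⟨1, Psi.one_mem, m, hm, one_mul m⟩
  · -- K * Psi = K
    apply Set.Subset.antisymm
    · rintro x hx
      rw [Set.mem_mul] at hx
      obtain ⟨m, hm, p, hp, rfl⟩ := hx
      have hpi : ({p⁻¹} : Set G) * K = K := psi_inv p hp
      have h2 : p⁻¹ * m⁻¹ ∈ K := by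
        have := memmul p⁻¹ m⁻¹ (hinv m hm); rwa [hpi] at this
      have := hinv _ h2
      rwa [mul_inv_rev, inv_inv, inv_inv] at this
    · intro m hm
      exact ⟨m, hm, 1, Psi.one_mem, mul_one m⟩
  · -- Psi ⊆ K
    intro g hg
    have hgK : ({g} : Set G) * K = K := hg
    have := memmul g 1 h1
    rwa [hgK, mul_one] at this
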